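/- Each of the six columns of the matrix M given in Section 2 of the paper lies in the kernel of the stoichiometric matrix N of the 2-layer cascade, and has all entries nonnegative; moreover the six columns are linearly independent and span ker(N). -/

import Mathlib

/-- The 10 × 12 stoichiometric matrix of the 2-layer cascade of Example 2.1. -/
def cascadeN : Matrix (Fin 10) (Fin 12) ℝ :=
  !![-1,1,0,0,0,1,0,0,0,0,0,0;
     0,0,1,-1,1,0,-1,1,1,0,0,0;
     0,0,0,0,0,0,-1,1,0,0,0,1;
     0,0,0,0,0,0,0,0,1,-1,1,0;
     -1,1,1,0,0,0,0,0,0,0,0,0;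
     0,0,0,-1,1,1,0,0,0,-1,1,1;
     1,-1,-1,0,0,0,0,0,0,0,0,0;
     0,0,0,0,0,0,1,-1,-1,0,0,0;
     0,0,0,1,-1,-1,0,0,0,0,0,0;
     0,0,0,0,0,0,0,0,0,1,-1,-1]

/-- The vector of educt complex monomials of the 2-layer cascade:
`φ(x) = (x₁x₅, x₇, x₇, x₂x₆, x₉, x₉, x₂x₃, x₈, x₈, x₄x₆, x₁₀, x₁₀)`. -/
def cascadePhi (x : Fin 10 → ℝ) : Fin 12 → ℝ :=
  ![x 0 * x 4, x 6, x 6, x 1 * x 5, x 8, x 8, x 1 * x 2, x 7, x 7,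
    x 3 * x 5, x 9, x 9]

/-- The 12 × 6 nonnegative matrix whose columns generate the cone
`ker(N) ∩ ℝ^{12}_{≥0}` for the 2-layer cascade. -/
def cascadeM : Matrix (Fin 12) (Fin 6) ℝ :=
  !![1,0,0,0,1,0;
     1,0,0,0,0,0;
     0,0,0,0,1,0;
     0,1,0,0,1,0;
     0,1,0,0,0,0;
     0,0,0,0,1,0;
     0,0,1,0,0,1;
     0,0,1,0,0,0;
     0,0,0,0,0,1;
     0,0,0,1,0,1;
     0,0,0,1,0,0;
     0,0,0,0,0,1]

private lemma vecConsEq {α : Type*} {n : ℕ} {x y : α} {u v : Fin n → α} :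
    Matrix.vecCons x u = Matrix.vecCons y v ↔ x = y ∧ u = v := Fin.cons_inj

private lemma colM0 : (fun i => cascadeM i 0) = ![(1:ℝ),1,0,0,0,0,0,0,0,0,0,0] := by
  funext i; fin_cases i <;> rfl
private lemma colM1 : (fun i => cascadeM i 1) = ![(0:ℝ),0,0,1,1,0,0,0,0,0,0,0] := by
  funext i; fin_cases i <;> rfl
private lemma colM2 : (fun i => cascadeM i 2) = ![(0:ℝ),0,0,0,0,0,1,1,0,0,0,0] := by
  funext i; fin_cases i <;> rfl
private lemma colM3 : (fun i => cascadeM i 3) = ![(0:ℝ),0,0,0,0,0,0,0,0,1,1,0] := by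
  funext i; fin_cases i <;> rfl
private lemma colM4 : (fun i => cascadeM i 4) = ![(1:ℝ),0,1,1,0,1,0,0,0,0,0,0] := by
  funext i; fin_cases i <;> rfl
private lemma colM5 : (fun i => cascadeM i 5) = ![(0:ℝ),0,0,0,0,0,1,0,1,1,0,1] := by
  funext i; fin_cases i <;> rfl

private lemma v12_0 {α : Type*} (a0 a1 a2 a3 a4 a5 a6 a7 a8 a9 a10 a11 : α) :
    (![a0,a1,a2,a3,a4,a5,a6,a7,a8,a9,a10,a11] : Fin 12 → α) 0 = a0 := rfl
private lemma v12_1 {α : Type*} (a0 a1 a2 a3 a4 a5 a6 a7 a8 a9 a10 a11 : α) :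
    (![a0,a1,a2,a3,a4,a5,a6,a7,a8,a9,a10,a11] : Fin 12 → α) 1 = a1 := rfl
private lemma v12_2 {α : Type*} (a0 a1 a2 a3 a4 a5 a6 a7 a8 a9 a10 a11 : α) :
    (![a0,a1,a2,a3,a4,a5,a6,a7,a8,a9,a10,a11] : Fin 12 → α) 2 = a2 := rfl
private lemma v12_3 {α : Type*} (a0 a1 a2 a3 a4 a5 a6 a7 a8 a9 a10 a11 : α) :
    (![a0,a1,a2,a3,a4,a5,a6,a7,a8,a9,a10,a11] : Fin 12 → α) 3 = a3 := rfl
private lemma v12_4 {α : Type*} (a0 a1 a2 a3 a4 a5 a6 a7 a8 a9 a10 a11 : α) :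
    (![a0,a1,a2,a3,a4,a5,a6,a7,a8,a9,a10,a11] : Fin 12 → α) 4 = a4 := rfl
private lemma v12_5 {α : Type*} (a0 a1 a2 a3 a4 a5 a6 a7 a8 a9 a10 a11 : α) :
    (![a0,a1,a2,a3,a4,a5,a6,a7,a8,a9,a10,a11] : Fin 12 → α) 5 = a5 := rfl
private lemma v12_6 {α : Type*} (a0 a1 a2 a3 a4 a5 a6 a7 a8 a9 a10 a11 : α) :
    (![a0,a1,a2,a3,a4,a5,a6,a7,a8,a9,a10,a11] : Fin 12 → α) 6 = a6 := rfl
private lemma v12_7 {α : Type*} (a0 a1 a2 a3 a4 a5 a6 a7 a8 a9 a10 a11 : α) :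
    (![a0,a1,a2,a3,a4,a5,a6,a7,a8,a9,a10,a11] : Fin 12 → α) 7 = a7 := rfl
private lemma v12_8 {α : Type*} (a0 a1 a2 a3 a4 a5 a6 a7 a8 a9 a10 a11 : α) :
    (![a0,a1,a2,a3,a4,a5,a6,a7,a8,a9,a10,a11] : Fin 12 → α) 8 = a8 := rfl
private lemma v12_9 {α : Type*} (a0 a1 a2 a3 a4 a5 a6 a7 a8 a9 a10 a11 : α) :
    (![a0,a1,a2,a3,a4,a5,a6,a7,a8,a9,a10,a11] : Fin 12 → α) 9 = a9 := rfl
private lemma v12_10 {α : Type*} (a0 a1 a2 a3 a4 a5 a6 a7 a8 a9 a10 a11 : α) :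
    (![a0,a1,a2,a3,a4,a5,a6,a7,a8,a9,a10,a11] : Fin 12 → α) 10 = a10 := rfl
private lemma v12_11 {α : Type*} (a0 a1 a2 a3 a4 a5 a6 a7 a8 a9 a10 a11 : α) :
    (![a0,a1,a2,a3,a4,a5,a6,a7,a8,a9,a10,a11] : Fin 12 → α) 11 = a11 := rfl

private lemma emptyVec0 {α : Type*} [Zero α] : (![] : Fin 0 → α) = 0 := Subsingleton.elim _ _

private lemma mulVecEval (w : Fin 12 → ℝ) :
    cascadeN.mulVec w = ![-w 0 + w 1 + w 5, w 2 - w 3 + w 4 - w 6 + w 7 + w 8,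
      -w 6 + w 7 + w 11, w 8 - w 9 + w 10, -w 0 + w 1 + w 2,
      -w 3 + w 4 + w 5 - w 9 + w 10 + w 11, w 0 - w 1 - w 2,
      w 6 - w 7 - w 8, w 3 - w 4 - w 5, w 9 - w 10 - w 11] := by
  have hw : w = ![w 0, w 1, w 2, w 3, w 4, w 5, w 6, w 7, w 8, w 9, w 10, w 11] := by
    funext i; fin_cases i <;> rfl
  conv_lhs => rw [hw]
  simp only [cascadeN, Matrix.cons_mulVec, Matrix.cons_dotProduct, Matrix.dotProduct_of_isEmpty,
    Matrix.head_cons, Matrix.tail_cons, Matrix.empty_mulVec, vecConsEq]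
  norm_num
  repeat' apply And.intro
  all_goals ring

private lemma cascadeM_nonneg : ∀ i j, 0 ≤ cascadeM i j := by
  intro i j
  fin_cases i <;> fin_cases j <;> norm_num [cascadeM]

set_option maxHeartbeats 1600000 in
/-- Each column of `M` lies in the kernel of the stoichiometric matrix `N`
and has nonnegative entries; moreover the six columns are linearly
independent and span `ker(N)`. -/
theorem cascadeM_columns_generate_kernel :
    (∀ j : Fin 6, cascadeN.mulVec (fun i => cascadeM i j) = 0) ∧
    (∀ i j, 0 ≤ cascadeM i j) ∧
    LinearIndependent ℝ (fun j : Fin 6 => (fun i => cascadeM i j : Fin 12 → ℝ)) ∧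
    (∀ v : Fin 12 → ℝ, cascadeN.mulVec v = 0 ↔
      v ∈ Submodule.span ℝ
        (Set.range (fun j : Fin 6 => (fun i => cascadeM i j : Fin 12 → ℝ)))) := by
  have key : ∀ j : Fin 6, cascadeN.mulVec (fun i => cascadeM i j) = 0 := by
    intro j
    fin_cases j
    · rw [show (fun i => cascadeM i (⟨0, by norm_num⟩ : Fin 6)) = _ from colM0, mulVecEval]
      simp only [v12_0, v12_1, v12_2, v12_3, v12_4, v12_5, v12_6, v12_7, v12_8, v12_9, v12_10, v12_11]
      norm_num [emptyVec0]
    · rw [show (fun i => cascadeM i (⟨1, by norm_num⟩ : Fin 6)) = _ from colM1, mulVecEval]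
      simp only [v12_0, v12_1, v12_2, v12_3, v12_4, v12_5, v12_6, v12_7, v12_8, v12_9, v12_10, v12_11]
      norm_num [emptyVec0]
    · rw [show (fun i => cascadeM i (⟨2, by norm_num⟩ : Fin 6)) = _ from colM2, mulVecEval]
      simp only [v12_0, v12_1, v12_2, v12_3, v12_4, v12_5, v12_6, v12_7, v12_8, v12_9, v12_10, v12_11]
      norm_num [emptyVec0]
    · rw [show (fun i => cascadeM i (⟨3, by norm_num⟩ : Fin 6)) = _ from colM3, mulVecEval]
      simp only [v12_0, v12_1, v12_2, v12_3, v12_4, v12_5, v12_6, v12_7, v12_8, v12_9, v12_10, v12_11]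
      norm_num [emptyVec0]
    · rw [show (fun i => cascadeM i (⟨4, by norm_num⟩ : Fin 6)) = _ from colM4, mulVecEval]
      simp only [v12_0, v12_1, v12_2, v12_3, v12_4, v12_5, v12_6, v12_7, v12_8, v12_9, v12_10, v12_11]
      norm_num [emptyVec0]
    · rw [show (fun i => cascadeM i (⟨5, by norm_num⟩ : Fin 6)) = _ from colM5, mulVecEval]
      simp only [v12_0, v12_1, v12_2, v12_3, v12_4, v12_5, v12_6, v12_7, v12_8, v12_9, v12_10, v12_11]
      norm_num [emptyVec0]
  refine ⟨key, cascadeM_nonneg, ?_, ?_⟩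
  · rw [Fintype.linearIndependent_iff]
    intro c hc
    rw [Fin.sum_univ_six] at hc
    simp only [colM0, colM1, colM2, colM3, colM4, colM5, Matrix.smul_cons, smul_eq_mul,
      mul_one, mul_zero, Matrix.cons_add, Matrix.add_cons, Matrix.head_cons,
      Matrix.tail_cons, Matrix.cons_eq_zero_iff, eq_iff_true_of_subsingleton,
      and_true, zero_add, add_zero] at hc
    obtain ⟨h1, h2, h3, h4, h5, h6, h7, h8, h9, h10, h11, h12⟩ := hc
    intro i
    fin_cases i
    · exact h2
    · exact h5
    · exact h8
    · exact h11
    · exact h3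
    · exact h9
  · intro v
    constructor
    · intro hv
      rw [mulVecEval] at hv
      simp only [Matrix.cons_eq_zero_iff, eq_iff_true_of_subsingleton, and_true] at hv
      obtain ⟨e0, e1, e2, e3, e4, e5, e6, e7, e8, e9⟩ := hv
      rw [Submodule.mem_span_range_iff_exists_fun ℝ]
      refine ⟨![v 1, v 4, v 7, v 10, v 2, v 8], ?_⟩
      rw [Fin.sum_univ_six]
      simp only [colM0, colM1, colM2, colM3, colM4, colM5,
        show (![v 1, v 4, v 7, v 10, v 2, v 8] : Fin 6 → ℝ) 0 = v 1 from rfl,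
        show (![v 1, v 4, v 7, v 10, v 2, v 8] : Fin 6 → ℝ) 1 = v 4 from rfl,
        show (![v 1, v 4, v 7, v 10, v 2, v 8] : Fin 6 → ℝ) 2 = v 7 from rfl,
        show (![v 1, v 4, v 7, v 10, v 2, v 8] : Fin 6 → ℝ) 3 = v 10 from rfl,
        show (![v 1, v 4, v 7, v 10, v 2, v 8] : Fin 6 → ℝ) 4 = v 2 from rfl,
        show (![v 1, v 4, v 7, v 10, v 2, v 8] : Fin 6 → ℝ) 5 = v 8 from rfl,
        Matrix.smul_cons, smul_eq_mul, mul_one, mul_zero,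
        Matrix.cons_add, Matrix.add_cons, Matrix.head_cons, Matrix.tail_cons]
      have hv' : v = ![v 0, v 1, v 2, v 3, v 4, v 5, v 6, v 7, v 8, v 9, v 10, v 11] := by
        funext i; fin_cases i <;> rfl
      conv_rhs => rw [hv']
      simp only [vecConsEq, eq_iff_true_of_subsingleton, and_true]
      repeat' apply And.intro
      all_goals linarith
    · intro hmem
      have hle : Submodule.span ℝ (Set.range (fun j : Fin 6 => (fun i => cascadeM i j : Fin 12 → ℝ)))
          ≤ LinearMap.ker cascadeN.mulVecLin := by
        rw [Submodule.span_le]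
        rintro _ ⟨j, rfl⟩
        simpa [Matrix.mulVecLin_apply] using key j
      simpa [Matrix.mulVecLin_apply] using hle hmem
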